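/- Let ψ be a branching mechanism of Lévy–Khintchine form with γ > 1, and let g be the gauge function defined on (0, r₀). For every c ∈ (0,∞) there exists r(c) ∈ (0, r₀), depending only on ψ and c, such that for all r ∈ (0, r(c)): g(r) · ψ′^{−1}(c·r^{−2}) ≤ 4r². -/

import Mathlib

open MeasureTheory Filter Set

noncomputable section

/-- The branching mechanism `ψ(λ) = αλ + βλ² + ∫_{(0,∞)} (e^{−λr} − 1 + λr) π(dr)`. -/
def psiFun (α β : ℝ) (π : Measure ℝ) : ℝ → ℝ := fun l =>
  α * l + β * l ^ 2 + ∫ r, (Real.exp (-(l * r)) - 1 + l * r) ∂π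

/-- `ψ′(λ) = α + 2βλ + ∫_{(0,∞)} r(1 − e^{−λr}) π(dr)`. -/
def psiDeriv (α β : ℝ) (π : Measure ℝ) : ℝ → ℝ := fun l =>
  α + 2 * β * l + ∫ r, r * (1 - Real.exp (-(l * r))) ∂π

/-- `(α, β, π)` is the datum of a (sub)critical branching mechanism of
Lévy–Khintchine form: `α, β ≥ 0`, `π` is a Borel measure carried by `(0,∞)`
with `∫ min(r, r²) π(dr) < ∞`. -/
structure IsBranchingMechanism (α β : ℝ) (π : Measure ℝ) : Prop where
  alpha_nonneg : 0 ≤ α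
  beta_nonneg : 0 ≤ β
  carried_on_pos : π (Set.Iic 0) = 0
  integ_min : Integrable (fun r => min r (r ^ 2)) π

/-- The lower index `γ_f = sup {c ≥ 0 : f(λ)λ^{−c} → ∞}` (with `sup ∅ = 0`). -/
def lowerIndex (f : ℝ → ℝ) : ℝ :=
  sSup {c : ℝ | 0 ≤ c ∧ Tendsto (fun l : ℝ => f l * l ^ (-c)) atTop atTop}

/-- The upper index `η_f = inf {c ≥ 0 : f(λ)λ^{−c} → 0}`. -/
def upperIndex (f : ℝ → ℝ) : ℝ :=
  sInf {c : ℝ | 0 ≤ c ∧ Tendsto (fun l : ℝ => f l * l ^ (-c)) atTop (nhds 0)}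

/-- `δ_f = sup {c ≥ 0 : ∃ C > 0, ∀ 1 ≤ μ ≤ λ, C f(μ)μ^{−c} ≤ f(λ)λ^{−c}}`. -/
def deltaIndex (f : ℝ → ℝ) : ℝ :=
  sSup {c : ℝ | 0 ≤ c ∧ ∃ C : ℝ, 0 < C ∧
    ∀ μ l : ℝ, 1 ≤ μ → μ ≤ l → C * (f μ * μ ^ (-c)) ≤ f l * l ^ (-c)}

/-- `r₀ = min(α^{−1/2}, e^{−e})`, with the convention `α^{−1/2} = ∞` when `α = 0`. -/
def gaugeR0 (α : ℝ) : ℝ :=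
  if α = 0 then Real.exp (-Real.exp 1)
  else min (α ^ (-(1 : ℝ) / 2)) (Real.exp (-Real.exp 1))

/-- The gauge function `g(r) = log log(1/r) / φ^{−1}(((1/r)·log log(1/r))²)`,
expressed through the inverse `φ^{−1}` of `φ = ψ′ ∘ ψ^{−1}`. -/
def gaugeFun (φinv : ℝ → ℝ) : ℝ → ℝ := fun r =>
  Real.log (Real.log (1 / r)) / φinv ((1 / r * Real.log (Real.log (1 / r))) ^ 2)

lemma exp_aux1 (x : ℝ) : 0 ≤ Real.exp (-x) - 1 + x := by
  have := Real.add_one_le_exp (-x); linarith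

lemma exp_aux4 (x : ℝ) : 1 - Real.exp (-x) ≤ x := by
  have := Real.add_one_le_exp (-x); linarith

lemma exp_aux2 {x : ℝ} (hx : 0 ≤ x) : Real.exp (-x) ≤ 1 := by
  calc Real.exp (-x) ≤ Real.exp 0 := Real.exp_le_exp.mpr (by linarith)
  _ = 1 := Real.exp_zero

lemma exp_aux3 {x : ℝ} (hx : 0 ≤ x) : Real.exp (-x) ≤ 1 - x + x ^ 2 := by
  have h1 := Real.add_one_le_exp x
  have h2 := Real.exp_pos x
  rw [Real.exp_neg]
  have h3 : (Real.exp x)⁻¹ * Real.exp x = 1 := inv_mul_cancel₀ h2.ne'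
  have h4 : 0 < (Real.exp x)⁻¹ := inv_pos.mpr h2
  have h5 : 0 ≤ 1 - x + x ^ 2 := by nlinarith [sq_nonneg (x - 1)]
  nlinarith [mul_le_mul_of_nonneg_left h1 h5, mul_nonneg hx (mul_nonneg hx hx)]

lemma core_ineq {a b : ℝ} (ha : 0 < a) (hab : a ≤ b) :
    a * (1 - Real.exp (-b)) ≤ b * (1 - Real.exp (-a)) := by
  have hmono : MonotoneOn
      (fun x => x * (1 - Real.exp (-a)) - a * (1 - Real.exp (-x))) (Set.Ici a) := by
    apply monotoneOn_of_deriv_nonneg (convex_Ici a)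
    · fun_prop
    · intro x hx
      apply DifferentiableAt.differentiableWithinAt
      fun_prop
    · intro x hx
      rw [interior_Ici] at hx
      have hd : HasDerivAt (fun x => x * (1 - Real.exp (-a)) - a * (1 - Real.exp (-x)))
          ((1 - Real.exp (-a)) - a * (Real.exp (-x))) x := by
        have h1 : HasDerivAt (fun x : ℝ => Real.exp (-x)) (-Real.exp (-x)) x := by
          convert (hasDerivAt_neg x).exp using 1; ring
        have h2 : HasDerivAt (fun x : ℝ => x * (1 - Real.exp (-a)))
            (1 - Real.exp (-a)) x := by
          simpa using (hasDerivAt_id x).mul_const (1 - Real.exp (-a))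
        have h3 : HasDerivAt (fun x : ℝ => a * (1 - Real.exp (-x))) (a * Real.exp (-x)) x := by
          have := (h1.const_sub 1).const_mul a
          simpa using this
        exact h2.sub h3
      rw [hd.deriv]
      have hax : a * Real.exp (-x) ≤ a * Real.exp (-a) :=
        mul_le_mul_of_nonneg_left (Real.exp_le_exp.mpr (by linarith [(mem_Ioi.mp hx).le])) ha.le
      have hkey : a * Real.exp (-a) ≤ 1 - Real.exp (-a) := by
        have h1 := Real.add_one_le_exp a
        have h2 := Real.exp_pos a
        have h3 : Real.exp (-a) * Real.exp a = 1 := by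
          rw [← Real.exp_add]; simp
        nlinarith [Real.exp_pos (-a)]
      linarith
  have h0 := hmono (self_mem_Ici) (mem_Ici.mpr hab) hab
  simp only at h0
  linarith

section Meas

variable {α β : ℝ} {π : Measure ℝ}

lemma ae_pos (h : IsBranchingMechanism α β π) : ∀ᵐ r ∂π, 0 < r := by
  rw [ae_iff]
  convert h.carried_on_pos using 2
  ext r; simp [not_lt]

lemma integrable_G (h : IsBranchingMechanism α β π) {l : ℝ} (hl : 0 ≤ l) :
    Integrable (fun r => r * (1 - Real.exp (-(l * r)))) π := by
  apply (h.integ_min.const_mul (max 1 l)).mono'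
  · exact (by fun_prop : Continuous fun r : ℝ => r * (1 - Real.exp (-(l * r)))).aestronglyMeasurable
  · filter_upwards [ae_pos h] with r hr
    have hx : 0 ≤ l * r := mul_nonneg hl hr.le
    have h1 : 0 ≤ 1 - Real.exp (-(l * r)) := by linarith [exp_aux2 hx]
    have h2 : 1 - Real.exp (-(l * r)) ≤ l * r := exp_aux4 (l * r)
    have h3 : 1 - Real.exp (-(l * r)) ≤ 1 := by linarith [Real.exp_pos (-(l * r))]
    rw [Real.norm_eq_abs, abs_of_nonneg (mul_nonneg hr.le h1)]
    rcases le_or_gt r 1 with hr1 | hr1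
    · rw [min_eq_right (by nlinarith)]
      have : r * (1 - Real.exp (-(l * r))) ≤ r * (l * r) :=
        mul_le_mul_of_nonneg_left h2 hr.le
      calc r * (1 - Real.exp (-(l * r))) ≤ l * r ^ 2 := by nlinarith
      _ ≤ max 1 l * r ^ 2 := by
          apply mul_le_mul_of_nonneg_right (le_max_right 1 l) (sq_nonneg r)
    · rw [min_eq_left (by nlinarith)]
      calc r * (1 - Real.exp (-(l * r))) ≤ r * 1 := mul_le_mul_of_nonneg_left h3 hr.le
      _ ≤ max 1 l * r := by rw [mul_one]; nlinarith [le_max_left 1 l]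

lemma integrable_F (h : IsBranchingMechanism α β π) {l : ℝ} (hl : 0 ≤ l) :
    Integrable (fun r => Real.exp (-(l * r)) - 1 + l * r) π := by
  apply (h.integ_min.const_mul (max l (l ^ 2))).mono'
  · exact (by fun_prop : Continuous fun r : ℝ =>
      Real.exp (-(l * r)) - 1 + l * r).aestronglyMeasurable
  · filter_upwards [ae_pos h] with r hr
    have hx : 0 ≤ l * r := mul_nonneg hl hr.le
    have h0 := exp_aux1 (l * r)
    have h2 : Real.exp (-(l * r)) - 1 + l * r ≤ l * r := by linarith [exp_aux2 hx]
    have h3 : Real.exp (-(l * r)) - 1 + l * r ≤ (l * r) ^ 2 := by nlinarith [exp_aux3 hx]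
    rw [Real.norm_eq_abs, abs_of_nonneg h0]
    rcases le_or_gt r 1 with hr1 | hr1
    · rw [min_eq_right (by nlinarith)]
      calc Real.exp (-(l * r)) - 1 + l * r ≤ (l * r) ^ 2 := h3
      _ = l ^ 2 * r ^ 2 := by ring
      _ ≤ max l (l ^ 2) * r ^ 2 :=
          mul_le_mul_of_nonneg_right (le_max_right l (l ^ 2)) (sq_nonneg r)
    · rw [min_eq_left (by nlinarith)]
      calc Real.exp (-(l * r)) - 1 + l * r ≤ l * r := h2
      _ ≤ max l (l ^ 2) * r := mul_le_mul_of_nonneg_right (le_max_left l (l ^ 2)) hr.le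

lemma psiFun_nonneg (h : IsBranchingMechanism α β π) {z : ℝ} (hz : 0 ≤ z) : 0 ≤ psiFun α β π z := by
  unfold psiFun
  have h1 : 0 ≤ ∫ r, (Real.exp (-(z * r)) - 1 + z * r) ∂π :=
    integral_nonneg fun r => exp_aux1 (z * r)
  have := h.alpha_nonneg
  have := h.beta_nonneg
  positivity

lemma psiDeriv_mono (h : IsBranchingMechanism α β π) {u v : ℝ} (hu : 0 ≤ u) (huv : u ≤ v) :
    psiDeriv α β π u ≤ psiDeriv α β π v := by
  unfold psiDeriv
  have hI : (∫ r, r * (1 - Real.exp (-(u * r))) ∂π) ≤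
      ∫ r, r * (1 - Real.exp (-(v * r))) ∂π := by
    apply integral_mono_ae (integrable_G h hu) (integrable_G h (hu.trans huv))
    filter_upwards [ae_pos h] with r hr
    have : Real.exp (-(v * r)) ≤ Real.exp (-(u * r)) :=
      Real.exp_le_exp.mpr (by nlinarith)
    nlinarith
  have := h.beta_nonneg
  nlinarith

lemma psiDeriv_ratio (h : IsBranchingMechanism α β π) {u v : ℝ} (hu : 0 < u) (huv : u ≤ v) :
    u * psiDeriv α β π v ≤ v * psiDeriv α β π u := by
  have hI : u * (∫ r, r * (1 - Real.exp (-(v * r))) ∂π) ≤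
      v * ∫ r, r * (1 - Real.exp (-(u * r))) ∂π := by
    rw [← integral_const_mul, ← integral_const_mul]
    apply integral_mono_ae ((integrable_G h (hu.le.trans huv)).const_mul u)
      ((integrable_G h hu.le).const_mul v)
    filter_upwards [ae_pos h] with r hr
    have hcore := core_ineq (mul_pos hu hr) (mul_le_mul_of_nonneg_right huv hr.le)
    calc u * (r * (1 - Real.exp (-(v * r)))) = u * r * (1 - Real.exp (-(v * r))) := by ring
    _ ≤ v * r * (1 - Real.exp (-(u * r))) := hcore
    _ = v * (r * (1 - Real.exp (-(u * r)))) := by ring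
  unfold psiDeriv
  have := h.alpha_nonneg
  nlinarith

lemma psiFun_conv (h : IsBranchingMechanism α β π) {u v : ℝ} (hu : 0 ≤ u) (huv : u ≤ v) :
    psiFun α β π u + (v - u) * psiDeriv α β π u ≤ psiFun α β π v := by
  have hI : (∫ r, (Real.exp (-(u * r)) - 1 + u * r) ∂π) +
      (v - u) * (∫ r, r * (1 - Real.exp (-(u * r))) ∂π) ≤
      ∫ r, (Real.exp (-(v * r)) - 1 + v * r) ∂π := by
    rw [← integral_const_mul, ← integral_add (integrable_F h hu)
      ((integrable_G h hu).const_mul (v - u))]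
    apply integral_mono ((integrable_F h hu).add ((integrable_G h hu).const_mul (v - u)))
      (integrable_F h (hu.trans huv))
    intro r
    simp only [Pi.add_apply]
    have h1 := Real.add_one_le_exp (-((v - u) * r))
    have h2 : Real.exp (-(v * r)) = Real.exp (-(u * r)) * Real.exp (-((v - u) * r)) := by
      rw [← Real.exp_add]; ring_nf
    have h3 := Real.exp_pos (-(u * r))
    nlinarith [mul_le_mul_of_nonneg_left h1 h3.le]
  unfold psiFun psiDeriv
  have := h.beta_nonneg
  nlinarith [mul_nonneg h.beta_nonneg (sq_nonneg (v - u))]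

end Meas

/-- if γ > 1, then for every c > 0 there is r(c) ∈ (0, r₀) such
that g(r)·ψ′^{−1}(c·r^{−2}) ≤ 4r² for all r ∈ (0, r(c)). -/
theorem statement7 (α β : ℝ) (π : Measure ℝ) (h : IsBranchingMechanism α β π)
    (hγ : 1 < lowerIndex (psiFun α β π))
    (ψinv φinv ψ'inv : ℝ → ℝ)
    (hψinv : ∀ x : ℝ, 0 ≤ x → 0 ≤ ψinv x ∧ psiFun α β π (ψinv x) = x)
    (hψinv' : ∀ y : ℝ, 0 ≤ y → ψinv (psiFun α β π y) = y)
    (hφinv : ∀ x : ℝ, α ≤ x → 0 ≤ φinv x ∧ psiDeriv α β π (ψinv (φinv x)) = x)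
    (hφinv' : ∀ y : ℝ, 0 ≤ y → φinv (psiDeriv α β π (ψinv y)) = y)
    (hψ'inv : ∀ x : ℝ, α ≤ x → 0 ≤ ψ'inv x ∧ psiDeriv α β π (ψ'inv x) = x)
    (hψ'inv' : ∀ y : ℝ, 0 ≤ y → ψ'inv (psiDeriv α β π y) = y)
    (c : ℝ) (hc : 0 < c) :
    ∃ rc : ℝ, 0 < rc ∧ rc < gaugeR0 α ∧
      ∀ r : ℝ, 0 < r → r < rc →
        gaugeFun φinv r * ψ'inv (c / r ^ 2) ≤ 4 * r ^ 2 := by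
  have hαn := h.alpha_nonneg
  set L₀ : ℝ := max 3 (max (Real.sqrt c + 1) (2 * c)) with hL₀def
  have hr0pos : 0 < gaugeR0 α := by
    unfold gaugeR0
    split_ifs with hα0
    · positivity
    · have hαpos : 0 < α := lt_of_le_of_ne hαn (Ne.symm hα0)
      exact lt_min (Real.rpow_pos_of_pos hαpos _) (Real.exp_pos _)
  have hca1 : 0 < c / (α + 1) := div_pos hc (by linarith)
  refine ⟨min (gaugeR0 α / 2)
      (min (Real.exp (-Real.exp L₀)) (Real.sqrt (c / (α + 1)))), ?_, ?_, ?_⟩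
  · exact lt_min (by positivity)
      (lt_min (Real.exp_pos _) (Real.sqrt_pos.mpr hca1))
  · calc min (gaugeR0 α / 2) (min (Real.exp (-Real.exp L₀)) (Real.sqrt (c / (α + 1))))
        ≤ gaugeR0 α / 2 := min_le_left _ _
    _ < gaugeR0 α := by linarith
  · intro r hr hrlt
    have hrc2 : r < Real.exp (-Real.exp L₀) :=
      lt_of_lt_of_le hrlt ((min_le_right _ _).trans (min_le_left _ _))
    have hrc3 : r < Real.sqrt (c / (α + 1)) :=
      lt_of_lt_of_le hrlt ((min_le_right _ _).trans (min_le_right _ _))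
    set L := Real.log (Real.log (1 / r)) with hLdef
    have h1r : 0 < 1 / r := by positivity
    have hstep : Real.exp (Real.exp L₀) < 1 / r := by
      rw [Real.exp_neg] at hrc2
      have hE := Real.exp_pos (Real.exp L₀)
      rw [lt_div_iff₀ hr]
      have h2 : Real.exp (Real.exp L₀) * r <
          Real.exp (Real.exp L₀) * (Real.exp (Real.exp L₀))⁻¹ :=
        mul_lt_mul_of_pos_left hrc2 hE
      rwa [mul_inv_cancel₀ hE.ne'] at h2
    have hlog1 : Real.exp L₀ < Real.log (1 / r) :=
      (Real.lt_log_iff_exp_lt h1r).mpr hstep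
    have hlogpos : 0 < Real.log (1 / r) := (Real.exp_pos _).trans hlog1
    have hLgt : L₀ < L := (Real.lt_log_iff_exp_lt hlogpos).mpr hlog1
    have hL3 : 3 ≤ L := le_trans (le_max_left _ _) hLgt.le
    have hLsc : Real.sqrt c + 1 ≤ L :=
      le_trans ((le_max_left _ _).trans (le_max_right _ _)) hLgt.le
    have hL2c : 2 * c ≤ L :=
      le_trans ((le_max_right _ _).trans (le_max_right _ _)) hLgt.le
    have hL2 : c < L ^ 2 := by
      nlinarith [Real.sq_sqrt hc.le, Real.sqrt_nonneg c, hLsc]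
    have hr2 : r ^ 2 < c / (α + 1) := (Real.lt_sqrt hr.le).mp hrc3
    rw [lt_div_iff₀ (by linarith : (0:ℝ) < α + 1)] at hr2
    have hαr2 : α * r ^ 2 ≤ c := by nlinarith [sq_nonneg r, hr2]
    have hr2p : (0:ℝ) < r ^ 2 := by positivity
    have hα1 : α ≤ c / r ^ 2 := (le_div_iff₀ hr2p).mpr hαr2
    have hXeq : (1 / r * L) ^ 2 = L ^ 2 / r ^ 2 := by
      field_simp
    have hα2 : α ≤ (1 / r * L) ^ 2 := by
      rw [hXeq, le_div_iff₀ hr2p]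
      linarith [hαr2, hL2]
    obtain ⟨hu0, huψ⟩ := hψ'inv (c / r ^ 2) hα1
    obtain ⟨hv0, hvψ⟩ := hψ'inv ((1 / r * L) ^ 2) hα2
    set u := ψ'inv (c / r ^ 2) with hudef
    set v := ψ'inv ((1 / r * L) ^ 2) with hvdef
    have hφX : φinv ((1 / r * L) ^ 2) = psiFun α β π v := by
      conv_lhs => rw [← hvψ]
      have h1 := hφinv' (psiFun α β π v) (psiFun_nonneg h hv0)
      rwa [hψinv' v hv0] at h1
    have hgauge : gaugeFun φinv r = L / psiFun α β π v := by
      unfold gaugeFun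
      rw [← hLdef, hφX]
    rw [hgauge]
    rcases hu0.eq_or_lt with hueq | hupos
    · rw [← hueq, mul_zero]; positivity
    · have huv : u ≤ v := by
        by_contra hlt
        push_neg at hlt
        have hm := psiDeriv_mono h hv0 hlt.le
        rw [huψ, hvψ, hXeq] at hm
        have : L ^ 2 ≤ c := by
          have h7 := mul_le_mul_of_nonneg_right hm hr2p.le
          calc L ^ 2 = L ^ 2 / r ^ 2 * r ^ 2 := by field_simp
          _ ≤ c / r ^ 2 * r ^ 2 := h7
          _ = c := by field_simp
        linarith
      have hratio := psiDeriv_ratio h hupos huv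
      rw [huψ, hvψ, hXeq] at hratio
      have hUL : u * L ^ 2 ≤ v * c := by
        have h8 := mul_le_mul_of_nonneg_right hratio hr2p.le
        calc u * L ^ 2 = u * (L ^ 2 / r ^ 2) * r ^ 2 := by field_simp
        _ ≤ v * (c / r ^ 2) * r ^ 2 := h8
        _ = v * c := by field_simp
      have hconv := psiFun_conv h hu0 huv
      rw [huψ] at hconv
      have hψu := psiFun_nonneg h hu0
      have hstep1 : u * (L ^ 2 - c) ≤ (v - u) * c := by linarith [hUL]
      have hstep2 : (v - u) * c ≤ psiFun α β π v * r ^ 2 := by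
        have h5 : (v - u) * (c / r ^ 2) ≤ psiFun α β π v := by linarith
        calc (v - u) * c = (v - u) * (c / r ^ 2) * r ^ 2 := by field_simp
        _ ≤ psiFun α β π v * r ^ 2 := mul_le_mul_of_nonneg_right h5 hr2p.le
      have hψvpos : 0 < psiFun α β π v := by
        by_contra hne
        push_neg at hne
        have h9 : 0 < u * (L ^ 2 - c) :=
          mul_pos hupos (by linarith : (0:ℝ) < L ^ 2 - c)
        have h10 : psiFun α β π v * r ^ 2 ≤ 0 * r ^ 2 :=
          mul_le_mul_of_nonneg_right hne hr2p.le
        rw [zero_mul] at h10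
        linarith [h9, h10]
      rw [div_mul_eq_mul_div, div_le_iff₀ hψvpos]
      have hLL : 3 * L ≤ L * L := mul_le_mul_of_nonneg_right hL3 (by linarith)
      have h6 : L ≤ 4 * (L ^ 2 - c) := by linarith [hLL, hL2c, hL3]
      calc L * u ≤ 4 * (L ^ 2 - c) * u := mul_le_mul_of_nonneg_right h6 hu0
      _ = 4 * (u * (L ^ 2 - c)) := by ring
      _ ≤ 4 * (psiFun α β π v * r ^ 2) := by linarith
      _ = 4 * r ^ 2 * psiFun α β π v := by ring
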